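/- A vector v ∈ ℝ³ satisfies v = g_M^X for some X ∈ 𝓜 and M ∈ {K,S,T} if and only if v = 𝔤 + a(ẽ_{k₀} − ẽ_{t₀}) + b(ẽ_{s₀} − ẽ_{k₀}) for some (a,b) ∈ ℤ² satisfying either (a ≥ 1, b ≥ 1 and gcd(a,b) = 1) or (a,b) ∈ {(1,0), (0,−1)}, where 𝔤 = ẽ_{s₀} + ẽ_{t₀} − ẽ_{k₀}. Moreover, (a,b) = (1,0) gives v = ẽ_{s₀} and (a,b) = (0,−1) gives v = ẽ_{t₀}. -/

import Mathlib

namespace Markov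

/-- The ambient space ℝ³. -/
abbrev V3 : Type := Fin 3 → ℝ

/-- Standard basis vectors ẽ₁, ẽ₂, ẽ₃ (indexed by `Fin 3`). -/
noncomputable def e (i : Fin 3) : V3 := Pi.single i 1

/-- The two generating letters of the free monoid 𝓜. -/
inductive Lt
  | S
  | T
  deriving DecidableEq

/-- Elements of the free monoid 𝓜 on `{S, T}`, as words (lists of letters
read left to right); the monoid operation is `++` and the identity is `[]`. -/
abbrev Word := List Lt

/-- A word is a trunk word iff it consists only of the letter `S`
(otherwise it is a branch word). -/
def IsTrunk (X : Word) : Prop := ∀ l ∈ X, l = Lt.S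

/-- Boolean trunk test. -/
def trunkB (X : Word) : Bool := X.all (fun l => decide (l = Lt.S))

/-- One mutation step for the triple `(g_K, g_S, g_T)`; the flag `trunk`
records whether the word being extended (on the right) is a trunk word. -/
noncomputable def gStep (trunk : Bool) (l : Lt) (v : V3 × V3 × V3) :
    V3 × V3 × V3 :=
  match l with
  | Lt.S => (2 • v.1 - v.2.1, v.1, v.2.2)
  | Lt.T =>
    if trunk then (2 • v.2.1 - v.2.2, v.2.1, v.1)
    else (2 • v.1 - v.2.2, v.1, v.2.1)

/-- Auxiliary recursion computing the g-vectors from the reversed word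
(head of the list = last letter of the word). -/
noncomputable def gRev (k s t : Fin 3) : Word → V3 × V3 × V3
  | [] => (2 • e s - e k, e s, e t)
  | l :: X => gStep (trunkB X) l (gRev k s t X)

/-- The triple of modified g-vectors `(g_K^X, g_S^X, g_T^X)` for the
permutation `(k₀, s₀, t₀) = (k, s, t)` of the indices. -/
noncomputable def g (k s t : Fin 3) (X : Word) : V3 × V3 × V3 :=
  gRev k s t X.reverse

/-- One mutation step for the triple `(c_K, c_S, c_T)`. -/
noncomputable def cStep (trunk : Bool) (l : Lt) (v : V3 × V3 × V3) :
    V3 × V3 × V3 :=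
  match l with
  | Lt.S => (-v.2.1, v.1 + 2 • v.2.1, v.2.2)
  | Lt.T =>
    if trunk then (-v.2.2, v.2.1 + 2 • v.2.2, v.1)
    else (-v.2.2, v.1 + 2 • v.2.2, v.2.1)

noncomputable def cRev (k s t : Fin 3) : Word → V3 × V3 × V3
  | [] => (-(e k), e s + 2 • e k, e t)
  | l :: X => cStep (trunkB X) l (cRev k s t X)

/-- The triple of modified c-vectors `(c_K^X, c_S^X, c_T^X)`. -/
noncomputable def c (k s t : Fin 3) (X : Word) : V3 × V3 × V3 :=
  cRev k s t X.reverse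

/-- `g_F^X = g_S^X + g_T^X − g_K^X`. -/
noncomputable def gF (k s t : Fin 3) (X : Word) : V3 :=
  (g k s t X).2.1 + (g k s t X).2.2 - (g k s t X).1

/-- `v_SK^X = g_K^X − g_S^X`. -/
noncomputable def vSK (k s t : Fin 3) (X : Word) : V3 :=
  (g k s t X).1 - (g k s t X).2.1

/-- `v_TK^X = g_K^X − g_T^X`. -/
noncomputable def vTK (k s t : Fin 3) (X : Word) : V3 :=
  (g k s t X).1 - (g k s t X).2.2

/-- `c_F^X = c_K^X + c_S^X + c_T^X`. -/
noncomputable def cF (k s t : Fin 3) (X : Word) : V3 :=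
  (c k s t X).1 + (c k s t X).2.1 + (c k s t X).2.2

/-- `x_SK^X = c_K^X + c_S^X`. -/
noncomputable def xSK (k s t : Fin 3) (X : Word) : V3 :=
  (c k s t X).1 + (c k s t X).2.1

/-- `x_TK^X = −(c_K^X + c_T^X)`. -/
noncomputable def xTK (k s t : Fin 3) (X : Word) : V3 :=
  -((c k s t X).1 + (c k s t X).2.2)

/-- Closed cone spanned by two vectors. -/
def C2 (v1 v2 : V3) : Set V3 :=
  {x | ∃ la lb : ℝ, 0 ≤ la ∧ 0 ≤ lb ∧ x = la • v1 + lb • v2}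

/-- Relatively open cone spanned by two vectors. -/
def C2o (v1 v2 : V3) : Set V3 :=
  {x | ∃ la lb : ℝ, 0 < la ∧ 0 < lb ∧ x = la • v1 + lb • v2}

/-- Closed cone spanned by three vectors. -/
def C3 (v1 v2 v3 : V3) : Set V3 :=
  {x | ∃ la lb lc : ℝ, 0 ≤ la ∧ 0 ≤ lb ∧ 0 ≤ lc ∧ x = la • v1 + lb • v2 + lc • v3}

/-- Relatively open cone spanned by four vectors. -/
def C4o (v1 v2 v3 v4 : V3) : Set V3 :=
  {x | ∃ la lb lc ld : ℝ, 0 < la ∧ 0 < lb ∧ 0 < lc ∧ 0 < ld ∧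
    x = la • v1 + lb • v2 + lc • v3 + ld • v4}

/-- The set `U_∘^X = C°(g_S^X, g_T^X, v_SK^X, v_TK^X)`. -/
noncomputable def Uo (k s t : Fin 3) (X : Word) : Set V3 :=
  C4o (g k s t X).2.1 (g k s t X).2.2 (vSK k s t X) (vTK k s t X)

/-- The set `U^W = U_∘^W ∪ C(g_S^W, g_T^W)`. -/
noncomputable def Uset (k s t : Fin 3) (W : Word) : Set V3 :=
  Uo k s t W ∪ C2 (g k s t W).2.1 (g k s t W).2.2

/-- Recursion step for the Calkin–Wilf-type coefficients `q`. -/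
def qstep (l : Lt) (p : ℤ × ℤ) : ℤ × ℤ :=
  match l with
  | Lt.S => (p.1 + p.2, p.2)
  | Lt.T => (p.2, p.1 + p.2)

/-- `qfun init X` : the pair obtained from `init` by the recursion
`q^{SX} = (a+b, b)`, `q^{TX} = (b, a+b)` (letters prepended). -/
def qfun (init : ℤ × ℤ) : Word → ℤ × ℤ
  | [] => init
  | l :: X => qstep l (qfun init X)

/-- Recursion step for the coefficients `p`. -/
def pstep (l : Lt) (p : ℤ × ℤ) : ℤ × ℤ :=
  match l with
  | Lt.S => (p.1 + p.2, p.2)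
  | Lt.T => (-p.2, -p.1 - p.2)

/-- `pfun init X` : the pair obtained from `init` by the recursion
`p^{SX} = (a+b, b)`, `p^{TX} = (−b, −a−b)` (letters prepended). -/
def pfun (init : ℤ × ℤ) : Word → ℤ × ℤ
  | [] => init
  | l :: X => pstep l (pfun init X)

/-- The three index data `σ₁ = (1,3,2)`, `σ₂ = (2,1,3)`, `σ₃ = (3,2,1)`
(written with indices `0,1,2` instead of `1,2,3`). -/
def sig : Fin 3 → Fin 3 × Fin 3 × Fin 3 :=
  ![(0, 2, 1), (1, 0, 2), (2, 1, 0)]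

/-- Modified g-vectors for the `i`-th subtree of the Markov quiver. -/
noncomputable def gM (i : Fin 3) (X : Word) : V3 × V3 × V3 :=
  g (sig i).1 (sig i).2.1 (sig i).2.2 X

/-- `𝔤ᵢ = ẽ_{s₀(i)} + ẽ_{t₀(i)} − ẽ_{k₀(i)}`. -/
noncomputable def giFrak (i : Fin 3) : V3 :=
  e (sig i).2.1 + e (sig i).2.2 - e (sig i).1

/-- The set `𝔊ᵢ` of modified g-vectors in the `i`-th subtree. -/
noncomputable def Gset (i : Fin 3) : Set V3 :=
  {v | ∃ a b : ℤ, 1 ≤ a ∧ 1 ≤ b ∧ Int.gcd a b = 1 ∧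
      v = giFrak i + (a : ℝ) • (e (sig i).1 - e (sig i).2.2) +
        (b : ℝ) • (e (sig i).2.1 - e (sig i).1)} ∪
    {e (sig i).2.1}

/-- The support `𝒮` of the G-fan of the Markov quiver. -/
noncomputable def Supp : Set V3 :=
  C3 (e 0) (e 1) (e 2) ∪
    ⋃ (i : Fin 3), ⋃ (X : Word), C3 (gM i X).1 (gM i X).2.1 (gM i X).2.2

/-- The half space `V = {x : x₁+x₂+x₃ > 0} ∪ {0}`. -/
def Vhalf : Set V3 := {x | 0 < x 0 + x 1 + x 2} ∪ {0}

namespace StmtAux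

abbrev P2 := ℤ × ℤ

def gZstep (trunk : Bool) (l : Lt) (v : P2 × P2 × P2) : P2 × P2 × P2 :=
  match l with
  | Lt.S => (2 • v.1 - v.2.1, v.1, v.2.2)
  | Lt.T =>
    if trunk then (2 • v.2.1 - v.2.2, v.2.1, v.1)
    else (2 • v.1 - v.2.2, v.1, v.2.1)

def gRevZ : Word → P2 × P2 × P2
  | [] => ((1, 1), (1, 0), (0, -1))
  | l :: X => gZstep (trunkB X) l (gRevZ X)

/-- coordinate map -/
noncomputable def phi (k s t : Fin 3) (p : P2) : V3 :=
  (e s + e t - e k) + (p.1 : ℝ) • (e k - e t) + (p.2 : ℝ) • (e s - e k)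

lemma phi_comb (k s t : Fin 3) (p q : P2) :
    phi k s t (2 • p - q) = 2 • phi k s t p - phi k s t q := by
  simp only [phi, two_nsmul, Prod.fst_sub, Prod.snd_sub, Prod.fst_add,
    Prod.snd_add]
  push_cast
  module

lemma gRev_eq_phi (k s t : Fin 3) (Y : Word) :
    gRev k s t Y = (phi k s t (gRevZ Y).1, phi k s t (gRevZ Y).2.1,
      phi k s t (gRevZ Y).2.2) := by
  induction Y with
  | nil =>
      simp only [gRev, gRevZ, phi]
      refine Prod.ext ?_ (Prod.ext ?_ ?_) <;> · push_cast; module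
  | cons l X ih =>
      cases l with
      | S =>
          simp only [gRev, gRevZ, gStep, gZstep, ih, phi_comb]
      | T =>
          simp only [gRev, gRevZ, gStep, gZstep, ih]
          cases trunkB X <;> simp only [if_true, if_false, Bool.false_eq_true,
            ite_false, ite_true, phi_comb]


lemma trunkB_replicate (n : ℕ) : trunkB (List.replicate n Lt.S) = true := by
  simp [trunkB, List.all_eq_true]

lemma gRevZ_replicate (n : ℕ) :
    gRevZ (List.replicate n Lt.S) = ((1, (n : ℤ) + 1), (1, (n : ℤ)), (0, -1)) := by
  induction n with
  | zero => simp [gRevZ]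
  | succ m ih =>
      rw [List.replicate_succ]
      simp only [gRevZ, gZstep, trunkB_replicate, ih]
      refine Prod.ext ?_ rfl
      simp [Prod.ext_iff, two_nsmul]
      push_cast
      ring

lemma eq_replicate_of_trunkB {Y : Word} (h : trunkB Y = true) :
    Y = List.replicate Y.length Lt.S := by
  rw [List.eq_replicate_length]
  intro b hb
  have := List.all_eq_true.mp h b hb
  simpa using this

/-- Good pairs: the target description. -/
def Good (p : P2) : Prop :=
  (1 ≤ p.1 ∧ 1 ≤ p.2 ∧ Int.gcd p.1 p.2 = 1) ∨ p = ((1 : ℤ), (0 : ℤ)) ∨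
    p = ((0 : ℤ), (-1 : ℤ))

lemma gcd_eq_one_of_det {a b c d : ℤ} (h : a * d - b * c = 1 ∨ a * d - b * c = -1) :
    Int.gcd a b = 1 := by
  have h1 : (Int.gcd a b : ℤ) ∣ a := Int.gcd_dvd_left a b
  have h2 : (Int.gcd a b : ℤ) ∣ b := Int.gcd_dvd_right a b
  have h3 : (Int.gcd a b : ℤ) ∣ 1 := by
    rcases h with h | h
    · calc (Int.gcd a b : ℤ) ∣ a * d - b * c := by
            exact dvd_sub (h1.mul_right d) (h2.mul_right c)
        _ = 1 := h
    · have : (Int.gcd a b : ℤ) ∣ -(1 : ℤ) := by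
        calc (Int.gcd a b : ℤ) ∣ a * d - b * c := by
              exact dvd_sub (h1.mul_right d) (h2.mul_right c)
          _ = -1 := h
      exact (dvd_neg).mp this
  exact Nat.dvd_one.mp (Int.ofNat_dvd.mp (by exact_mod_cast h3))


/-- Invariant along branch words (reversed). -/
def BInv (K S T : P2) : Prop :=
  K = S + T ∧ (S.1 * T.2 - S.2 * T.1 = 1 ∨ S.1 * T.2 - S.2 * T.1 = -1) ∧
    1 ≤ S.1 ∧ 0 ≤ S.2 ∧ 1 ≤ T.1 ∧ 0 ≤ T.2 ∧ 1 ≤ S.2 + T.2 ∧ Good S ∧ Good T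

lemma good_sum {S T : P2}
    (hdet : S.1 * T.2 - S.2 * T.1 = 1 ∨ S.1 * T.2 - S.2 * T.1 = -1)
    (h1 : 1 ≤ S.1) (h2 : 0 ≤ S.2) (h3 : 1 ≤ T.1) (h4 : 0 ≤ T.2)
    (h5 : 1 ≤ S.2 + T.2) : Good (S + T) := by
  left
  refine ⟨by simp [Prod.fst_add]; omega, by simp [Prod.snd_add]; omega, ?_⟩
  have : (S + T).1 * S.2 - (S + T).2 * S.1 = -(S.1 * T.2 - S.2 * T.1) := by
    simp [Prod.fst_add, Prod.snd_add]; ring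
  apply gcd_eq_one_of_det (c := S.1) (d := S.2)
  rw [this]
  omega

lemma binv_step (l : Lt) {K S T : P2} (h : BInv K S T) :
    BInv (gZstep false l (K, S, T)).1 (gZstep false l (K, S, T)).2.1
      (gZstep false l (K, S, T)).2.2 := by
  obtain ⟨hK, hdet, h1, h2, h3, h4, h5, hGS, hGT⟩ := h
  cases l with
  | S =>
      have hval : (gZstep false Lt.S (K, S, T)) = (S + T + T, S + T, T) := by
        simp only [gZstep, hK]
        refine Prod.ext ?_ rfl
        simp only [two_nsmul, Prod.ext_iff, Prod.fst_add, Prod.snd_add,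
          Prod.fst_sub, Prod.snd_sub]
        constructor <;> ring
      rw [hval]
      refine ⟨rfl, ?_, ?_, ?_, h3, h4, ?_, good_sum hdet h1 h2 h3 h4 h5, hGT⟩
      · simp only [Prod.fst_add, Prod.snd_add]
        rcases hdet with h | h
        · left; linarith [h]
        · right; linarith [h]
      · simp only [Prod.fst_add]; omega
      · simp only [Prod.snd_add]; omega
      · simp only [Prod.fst_add, Prod.snd_add]; omega
  | T =>
      have hval : (gZstep false Lt.T (K, S, T)) = (S + T + S, S + T, S) := by
        simp only [gZstep, hK, Bool.false_eq_true, ite_false]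
        refine Prod.ext ?_ rfl
        simp only [two_nsmul, Prod.ext_iff, Prod.fst_add, Prod.snd_add,
          Prod.fst_sub, Prod.snd_sub]
        constructor <;> ring
      rw [hval]
      refine ⟨rfl, ?_, ?_, ?_, h1, h2, ?_, good_sum hdet h1 h2 h3 h4 h5, hGS⟩
      · simp only [Prod.fst_add, Prod.snd_add]
        rcases hdet with h | h
        · right; linarith [h]
        · left; linarith [h]
      · simp only [Prod.fst_add]; omega
      · simp only [Prod.snd_add]; omega
      · simp only [Prod.fst_add, Prod.snd_add]; omega

lemma binv_branch : ∀ Y : Word, trunkB Y = false →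
    BInv (gRevZ Y).1 (gRevZ Y).2.1 (gRevZ Y).2.2 := by
  intro Y
  induction Y with
  | nil => intro h; simp [trunkB] at h
  | cons l X ih =>
      intro h
      cases hX : trunkB X with
      | true =>
          -- X is trunk; l must be T
          cases l with
          | S =>
              exfalso
              have : trunkB (Lt.S :: X) = true := by
                simp [trunkB, List.all_cons, List.all_eq_true] at hX ⊢
                exact hX
              simp [this] at h
          | T =>
              have hrep := eq_replicate_of_trunkB hX
              have hz : gRevZ X = ((1, (X.length : ℤ) + 1), (1, (X.length : ℤ)), (0, -1)) := by
                rw [hrep, gRevZ_replicate]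
                simp
              simp only [gRevZ, gZstep, hX, if_true, hz]
              set n : ℤ := (X.length : ℤ) with hn
              have hn0 : 0 ≤ n := by positivity
              have hval : (2 • ((1 : ℤ), n) - ((0 : ℤ), (-1 : ℤ))) = ((2 : ℤ), 2 * n + 1) := by
                simp only [two_nsmul, Prod.ext_iff, Prod.fst_add, Prod.snd_add,
                  Prod.fst_sub, Prod.snd_sub]
                constructor <;> ring
              rw [hval]
              refine ⟨?_, ?_, le_refl 1, hn0, le_refl 1, by omega, ?_, ?_, ?_⟩
              · simp only [Prod.ext_iff, Prod.fst_add, Prod.snd_add]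
                constructor <;> ring
              · left; show (1 : ℤ) * (n + 1) - n * 1 = 1; ring
              · show (1 : ℤ) ≤ n + (n + 1); omega
              · rcases eq_or_lt_of_le hn0 with h0 | h0
                · exact Or.inr (Or.inl (by rw [← h0]))
                · exact Or.inl ⟨le_refl 1, by omega, Int.one_gcd⟩
              · exact Or.inl ⟨le_refl 1, by omega, Int.one_gcd⟩
      | false =>
          have := ih hX
          simp only [gRevZ, hX]
          exact binv_step l this


/-- Reachable branch states `(S, T)`. -/
inductive Reach : P2 → P2 → Prop
  | base (n : ℤ) (hn : 0 ≤ n) : Reach (1, n) (1, n + 1)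
  | stepS {S T : P2} (h : Reach S T) : Reach (S + T) T
  | stepT {S T : P2} (h : Reach S T) : Reach (S + T) S

lemma reach_word {S T : P2} (h : Reach S T) :
    ∃ Y : Word, trunkB Y = false ∧ gRevZ Y = (S + T, S, T) := by
  induction h with
  | base n hn =>
      refine ⟨Lt.T :: List.replicate n.toNat Lt.S, ?_, ?_⟩
      · simp [trunkB]
      · have hz := gRevZ_replicate n.toNat
        have hcast : ((n.toNat : ℤ)) = n := Int.toNat_of_nonneg hn
        rw [hcast] at hz
        simp only [gRevZ, gZstep, trunkB_replicate, if_true, hz]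
        refine Prod.ext ?_ rfl
        simp only [two_nsmul, Prod.ext_iff, Prod.fst_add, Prod.snd_add,
          Prod.fst_sub, Prod.snd_sub]
        constructor <;> ring
  | stepS h ih =>
      obtain ⟨Y, hY, hz⟩ := ih
      refine ⟨Lt.S :: Y, by simp [trunkB, List.all_cons]; simp [trunkB] at hY; tauto, ?_⟩
      simp only [gRevZ, gZstep, hY, hz]
      refine Prod.ext ?_ rfl
      simp only [two_nsmul, Prod.ext_iff, Prod.fst_add, Prod.snd_add,
        Prod.fst_sub, Prod.snd_sub]
      constructor <;> ring
  | stepT h ih =>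
      obtain ⟨Y, hY, hz⟩ := ih
      refine ⟨Lt.T :: Y, by simp [trunkB], ?_⟩
      simp only [gRevZ, gZstep, hY, hz, Bool.false_eq_true, ite_false]
      refine Prod.ext ?_ rfl
      simp only [two_nsmul, Prod.ext_iff, Prod.fst_add, Prod.snd_add,
        Prod.fst_sub, Prod.snd_sub]
      constructor <;> ring


/-- Sufficient condition for reachability. -/
def Cond (S T : P2) : Prop :=
  (S.1 * T.2 - S.2 * T.1 = 1 ∨ S.1 * T.2 - S.2 * T.1 = -1) ∧
    ((S.1 = 1 ∧ T.1 = 1 ∧ 0 ≤ S.2 ∧ T.2 = S.2 + 1) ∨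
      (2 ≤ S.1 ∧ 1 ≤ T.1 ∧ T.1 ≤ S.1 ∧ 0 ≤ T.2 ∧ T.2 ≤ S.2))

lemma reach_of_cond (m : ℕ) : ∀ S T : P2, (S.1 + T.1).toNat ≤ m → Cond S T → Reach S T := by
  induction m with
  | zero =>
      intro S T hm ⟨hdet, hc⟩
      exfalso
      rcases hc with ⟨h1, h2, _, _⟩ | ⟨h1, h2, _, _, _⟩ <;> omega
  | succ m ih =>
      rintro S T hm ⟨hdet, hc⟩
      rcases hc with ⟨h1, h2, h3, h4⟩ | ⟨h1, h2, h3, h4, h5⟩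
      · -- base form
        have hS : S = (1, S.2) := Prod.ext h1 rfl
        have hT : T = (1, S.2 + 1) := Prod.ext h2 h4
        rw [hS, hT]
        exact Reach.base S.2 h3
      · -- non-base form
        set S' : P2 := S - T with hS'
        have hS'1 : S'.1 = S.1 - T.1 := rfl
        have hS'2 : S'.2 = S.2 - T.2 := rfl
        have hdet' : S'.1 * T.2 - S'.2 * T.1 = S.1 * T.2 - S.2 * T.1 := by
          rw [hS'1, hS'2]; ring
        have hSplus : S' + T = S := by rw [hS']; abel
        have hTplus : T + S' = S := by rw [hS']; abel
        -- S'.1 ≥ 1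
        have hS'1pos : 1 ≤ S'.1 := by
          rw [hS'1]
          by_contra hcon
          push_neg at hcon
          have he : S.1 = T.1 := by omega
          -- det = T.1 * (T.2 - S.2), |det| = 1, T.1 = S.1 ≥ 2
          have heq : S.1 * T.2 - S.2 * T.1 = T.1 * (T.2 - S.2) := by rw [he]; ring
          have hdvd : T.1 ∣ 1 := by
            rcases hdet with hd | hd <;> rw [heq] at hd
            · exact ⟨T.2 - S.2, hd.symm⟩
            · exact (dvd_neg).mp ⟨T.2 - S.2, hd.symm⟩
          have := Int.le_of_dvd one_pos hdvd
          omega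
        have hS'2pos : 0 ≤ S'.2 := by rw [hS'2]; omega
        rcases lt_trichotomy T.1 S'.1 with hcmp | hcmp | hcmp
        · -- parent (S', T), child by stepS
          have hT2le : T.2 ≤ S'.2 := by
            by_contra hcon
            push_neg at hcon
            rcases hdet with hd | hd <;> rw [← hdet'] at hd <;> nlinarith
          have hcond : Cond S' T := by
            refine ⟨by rw [hdet']; exact hdet, Or.inr ⟨by omega, h2, by omega, h4, hT2le⟩⟩
          have hreach : Reach S' T := by
            apply ih _ _ _ hcond
            omega
          have := Reach.stepS hreach
          rwa [hSplus] at this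
        · -- equality: T.1 = S'.1, forces T.1 = 1
          have hT1 : T.1 = 1 := by
            by_contra hcon
            have h2' : 2 ≤ T.1 := by omega
            have he : S.1 = 2 * T.1 := by omega
            have heq : S.1 * T.2 - S.2 * T.1 = T.1 * (2 * T.2 - S.2) := by rw [he]; ring
            have hdvd : T.1 ∣ 1 := by
              rcases hdet with hd | hd <;> rw [heq] at hd
              · exact ⟨2 * T.2 - S.2, hd.symm⟩
              · exact (dvd_neg).mp ⟨2 * T.2 - S.2, hd.symm⟩
            have := Int.le_of_dvd one_pos hdvd
            omega
          have hS1 : S.1 = 2 := by omega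
          have hdd : T.2 - S'.2 = 1 ∨ T.2 - S'.2 = -1 := by
            have : S'.1 * T.2 - S'.2 * T.1 = T.2 - S'.2 := by
              rw [hT1]; rw [hS'1, hS1, hT1]; ring
            rw [hdet'] at this
            omega
          rcases hdd with hdd | hdd
          · -- base parent (S', T)
            have hcond : Cond S' T := by
              refine ⟨by rw [hdet']; exact hdet, Or.inl ⟨by omega, hT1, hS'2pos, by omega⟩⟩
            have hreach : Reach S' T := by
              apply ih _ _ _ hcond
              omega
            have := Reach.stepS hreach
            rwa [hSplus] at this
          · -- base parent (T, S')
            have hcond : Cond T S' := by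
              refine ⟨?_, Or.inl ⟨hT1, by omega, h4, by omega⟩⟩
              have : T.1 * S'.2 - T.2 * S'.1 = -(S'.1 * T.2 - S'.2 * T.1) := by ring
              rw [this, hdet']
              omega
            have hreach : Reach T S' := by
              apply ih _ _ _ hcond
              omega
            have := Reach.stepT hreach
            rwa [hTplus] at this
        · -- parent (T, S'), child by stepT
          have hS'2le : S'.2 ≤ T.2 := by
            by_contra hcon
            push_neg at hcon
            rcases hdet with hd | hd <;> rw [← hdet'] at hd <;> nlinarith
          have hcond : Cond T S' := by
            refine ⟨?_, Or.inr ⟨by omega, hS'1pos, by omega, hS'2pos, hS'2le⟩⟩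
            have : T.1 * S'.2 - T.2 * S'.1 = -(S'.1 * T.2 - S'.2 * T.1) := by ring
            rw [this, hdet']
            omega
          have hreach : Reach T S' := by
            apply ih _ _ _ hcond
            omega
          have := Reach.stepT hreach
          rwa [hTplus] at this


lemma all_good (Y : Word) :
    Good (gRevZ Y).1 ∧ Good (gRevZ Y).2.1 ∧ Good (gRevZ Y).2.2 := by
  cases hY : trunkB Y with
  | true =>
      have hrep := eq_replicate_of_trunkB hY
      have hz : gRevZ Y = ((1, (Y.length : ℤ) + 1), (1, (Y.length : ℤ)), (0, -1)) := by
        rw [hrep, gRevZ_replicate]; simp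
      rw [hz]
      refine ⟨Or.inl ⟨le_refl 1, ?_, Int.one_gcd⟩, ?_, Or.inr (Or.inr rfl)⟩
      · show (1 : ℤ) ≤ (Y.length : ℤ) + 1
        have : (0 : ℤ) ≤ (Y.length : ℤ) := Int.natCast_nonneg _
        omega
      rcases Nat.eq_zero_or_pos Y.length with h0 | h0
      · exact Or.inr (Or.inl (by rw [h0]; norm_num))
      · refine Or.inl ⟨le_refl 1, ?_, Int.one_gcd⟩
        show (1 : ℤ) ≤ (Y.length : ℤ)
        exact_mod_cast h0
  | false =>
      obtain ⟨hK, hdet, h1, h2, h3, h4, h5, hGS, hGT⟩ := binv_branch Y hY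
      exact ⟨hK ▸ good_sum hdet h1 h2 h3 h4 h5, hGS, hGT⟩

lemma bezout (a b : ℤ) (ha : 3 ≤ a) (hb : 1 ≤ b) (h : Int.gcd a b = 1) :
    ∃ x y : ℤ, 1 ≤ x ∧ 2 * x ≤ a ∧ 0 ≤ y ∧ 2 * y ≤ b ∧
      (a * y - b * x = 1 ∨ a * y - b * x = -1) := by
  obtain ⟨u, v, huv⟩ := Int.isCoprime_iff_gcd_eq_one.mpr h
  -- u * a + v * b = 1
  set x0 : ℤ := -v with hx0
  set y0 : ℤ := u with hy0
  have hdet0 : a * y0 - b * x0 = 1 := by rw [hx0, hy0]; linarith [huv]; 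
  set k : ℤ := x0 / a with hk
  set x1 : ℤ := x0 % a with hx1
  set y1 : ℤ := y0 - b * k with hy1
  have hx1eq : x1 = x0 - a * k := by rw [hx1, hk, Int.emod_def]
  have hdet1 : a * y1 - b * x1 = 1 := by rw [hy1, hx1eq]; ring_nf; linarith [hdet0]
  have hx1nonneg : 0 ≤ x1 := Int.emod_nonneg x0 (by omega)
  have hx1lt : x1 < a := Int.emod_lt_of_pos x0 (by omega)
  have hx1pos : 1 ≤ x1 := by
    rcases eq_or_lt_of_le hx1nonneg with h0 | h0
    · exfalso
      have : a * y1 = 1 := by rw [← h0] at hdet1; linarith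
      have : a ∣ 1 := ⟨y1, this.symm⟩
      have := Int.le_of_dvd one_pos this
      omega
    · omega
  have hy1pos : 1 ≤ y1 := by nlinarith
  rcases le_or_gt (2 * x1) a with hc | hc
  · refine ⟨x1, y1, hx1pos, hc, by omega, ?_, Or.inl hdet1⟩
    nlinarith
  · refine ⟨a - x1, b - y1, by omega, by omega, ?_, ?_, Or.inr (by linarith [hdet1] <;> ring_nf)⟩
    · nlinarith
    · nlinarith

lemma good_K (a b : ℤ) (ha : 2 ≤ a) (hb : 1 ≤ b) (h : Int.gcd a b = 1) :
    ∃ Y : Word, (gRevZ Y).1 = (a, b) := by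
  rcases eq_or_lt_of_le ha with h2 | h3
  · -- a = 2, b odd
    have hodd : ¬ (2 : ℤ) ∣ b := by
      intro hdvd
      have h2a : (2 : ℤ) ∣ a := by rw [← h2]
      have := Int.dvd_gcd h2a hdvd
      rw [h] at this
      norm_num at this
    set n : ℤ := (b - 1) / 2 with hn
    have hb2 : b = 2 * n + 1 := by omega
    have hn0 : 0 ≤ n := by omega
    obtain ⟨Y, _, hz⟩ := reach_word (Reach.base n hn0)
    refine ⟨Y, ?_⟩
    rw [hz]
    refine Prod.ext ?_ ?_
    · show (1 : ℤ) + 1 = a; omega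
    · show n + (n + 1) = b; omega
  · -- a ≥ 3
    obtain ⟨x, y, hx1, hx2, hy1, hy2, hdet⟩ := bezout a b (by omega) hb h
    have hcond : Cond (a - x, b - y) (x, y) := by
      refine ⟨?_, Or.inr ⟨?_, ?_, ?_, ?_, ?_⟩⟩
      · show (a - x) * y - (b - y) * x = 1 ∨ (a - x) * y - (b - y) * x = -1
        rcases hdet with hd | hd
        · left; linarith [hd]
        · right; linarith [hd]
      · show (2 : ℤ) ≤ a - x; omega
      · show (1 : ℤ) ≤ x; omega
      · show x ≤ a - x; omega
      · show (0 : ℤ) ≤ y; omega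
      · show y ≤ b - y; omega
    have hreach := reach_of_cond ((a - x) + x).toNat _ _ (le_refl _) hcond
    obtain ⟨Y, _, hz⟩ := reach_word hreach
    refine ⟨Y, ?_⟩
    rw [hz]
    refine Prod.ext ?_ ?_
    · show (a - x) + x = a; ring
    · show (b - y) + y = b; ring

lemma good_to_word (a b : ℤ) (hG : Good (a, b)) :
    ∃ Y : Word, (a, b) = (gRevZ Y).1 ∨ (a, b) = (gRevZ Y).2.1 ∨
      (a, b) = (gRevZ Y).2.2 := by
  rcases hG with ⟨h1, h2, h3⟩ | h | h
  · rcases eq_or_lt_of_le h1 with ha1 | ha2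
    · -- a = 1 : trunk word
      refine ⟨List.replicate (b - 1).toNat Lt.S, Or.inl ?_⟩
      rw [gRevZ_replicate]
      have : ((b - 1).toNat : ℤ) = b - 1 := Int.toNat_of_nonneg (by omega)
      rw [this]
      refine Prod.ext ?_ ?_
      · show a = (1 : ℤ); omega
      · show b = b - 1 + 1; ring
    · obtain ⟨Y, hY⟩ := good_K a b (by omega) h2 h3
      exact ⟨Y, Or.inl hY.symm⟩
  · exact ⟨[], Or.inr (Or.inl (by rw [h]; rfl))⟩
  · exact ⟨[], Or.inr (Or.inr (by rw [h]; rfl))⟩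




lemma good_iff (p : P2) (v : V3) (k s t : Fin 3) (hv : v = phi k s t p)
    (hG : Good p) :
    ∃ a b : ℤ,
      v = (e s + e t - e k) + (a : ℝ) • (e k - e t) + (b : ℝ) • (e s - e k) ∧
      ((1 ≤ a ∧ 1 ≤ b ∧ Int.gcd a b = 1) ∨ (a = 1 ∧ b = 0) ∨
        (a = 0 ∧ b = -1)) := by
  refine ⟨p.1, p.2, by rw [hv]; rfl, ?_⟩
  rcases hG with h | h | h
  · exact Or.inl h
  · exact Or.inr (Or.inl ⟨by rw [h], by rw [h]⟩)
  · exact Or.inr (Or.inr ⟨by rw [h], by rw [h]⟩)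

theorem main (k s t : Fin 3) (v : V3) :
    (∃ X : Word,
      v = (gRev k s t X.reverse).1 ∨ v = (gRev k s t X.reverse).2.1 ∨
        v = (gRev k s t X.reverse).2.2) ↔
    (∃ a b : ℤ,
      v = (e s + e t - e k) + (a : ℝ) • (e k - e t) + (b : ℝ) • (e s - e k) ∧
      ((1 ≤ a ∧ 1 ≤ b ∧ Int.gcd a b = 1) ∨ (a = 1 ∧ b = 0) ∨
        (a = 0 ∧ b = -1))) := by
  constructor
  · rintro ⟨X, hX⟩
    set Y : Word := X.reverse with hY
    have hphi := gRev_eq_phi k s t Y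
    have hg := all_good Y
    rcases hX with h | h | h
    · exact good_iff _ _ k s t (by rw [h, hphi]) hg.1
    · exact good_iff _ _ k s t (by rw [h, hphi]) hg.2.1
    · exact good_iff _ _ k s t (by rw [h, hphi]) hg.2.2
  · rintro ⟨a, b, hv, hab⟩
    have hG : Good (a, b) := by
      rcases hab with h | ⟨h1, h2⟩ | ⟨h1, h2⟩
      · exact Or.inl h
      · exact Or.inr (Or.inl (by rw [h1, h2]))
      · exact Or.inr (Or.inr (by rw [h1, h2]))
    obtain ⟨Y, hY⟩ := good_to_word a b hG
    refine ⟨Y.reverse, ?_⟩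
    have hrev : Y.reverse.reverse = Y := List.reverse_reverse Y
    rw [hrev]
    have hphi := gRev_eq_phi k s t Y
    rcases hY with h | h | h
    · left; rw [hphi, ← h, hv]; rfl
    · right; left; rw [hphi, ← h, hv]; rfl
    · right; right; rw [hphi, ← h, hv]; rfl


end StmtAux

/-- coprime-number expression of all modified g-vectors. -/
theorem stmt_13 (k s t : Fin 3) (hks : k ≠ s) (hkt : k ≠ t) (hst : s ≠ t) :
    (∀ v : V3,
      (∃ X : Word,
        v = (g k s t X).1 ∨ v = (g k s t X).2.1 ∨ v = (g k s t X).2.2) ↔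
      (∃ a b : ℤ,
        v = (e s + e t - e k) + (a : ℝ) • (e k - e t) + (b : ℝ) • (e s - e k) ∧
        ((1 ≤ a ∧ 1 ≤ b ∧ Int.gcd a b = 1) ∨ (a = 1 ∧ b = 0) ∨
          (a = 0 ∧ b = -1)))) ∧
    (e s + e t - e k) + ((1 : ℝ) • (e k - e t) + (0 : ℝ) • (e s - e k)) = e s ∧
    (e s + e t - e k) + ((0 : ℝ) • (e k - e t) + (-1 : ℝ) • (e s - e k)) = e t := by
  refine ⟨fun v => ?_, by module, by module⟩
  simp only [g]
  exact StmtAux.main k s t v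

end Markov
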